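/- Suppose f: ℝ → ℝ is continuous, twice differentiable outside a finite set, with |f(x)|, |f'(x)|, |f''(x)| ≤ c e^{c|x|} wherever defined. Let T_η[f](x) := E[f(x + ηG)] with G a standard Gaussian and η ∈ (0,1). If f is twice differentiable on the interval (x−δ, x+δ), then |f'(x) − T_η[f'](x)| ≤ C(δ e^{C|x|} + e^{C|x|} e^{−C'(δ/η)²}) for constants C, C' depending only on c. -/

import Mathlib

open MeasureTheory ProbabilityTheory Real Filter Topology


lemma gauss_pdf_ptwise (a : ℝ) (x : ℝ) :
    gaussianPDFReal 0 1 x * Real.exp (a * |x|) ≤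
      Real.exp (a ^ 2 / 2) * (gaussianPDFReal a 1 x + gaussianPDFReal (-a) 1 x) := by
  simp only [gaussianPDFReal]
  push_cast
  have hK : (0:ℝ) ≤ (Real.sqrt (2 * π * 1))⁻¹ := by positivity
  have hE : (0:ℝ) < rexp (a ^ 2 / 2) := Real.exp_pos _
  rcases abs_cases x with ⟨h1, h2⟩ | ⟨h1, h2⟩ <;> rw [h1]
  · have e1 : rexp (-(x-0)^2/(2*1)) * rexp (a*x) = rexp (a^2/2) * rexp (-(x-a)^2/(2*1)) := by
      rw [← Real.exp_add, ← Real.exp_add]; ring_nf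
    nlinarith [Real.exp_pos (-(x - -a)^2/(2*1)), mul_nonneg hK (Real.exp_pos (-(x - -a)^2/(2*1))).le]
  · have e1 : rexp (-(x-0)^2/(2*1)) * rexp (a*(-x)) = rexp (a^2/2) * rexp (-(x - -a)^2/(2*1)) := by
      rw [← Real.exp_add, ← Real.exp_add]; ring_nf
    nlinarith [Real.exp_pos (-(x - a)^2/(2*1)), mul_nonneg hK (Real.exp_pos (-(x - a)^2/(2*1))).le]

lemma gauss_lint (a : ℝ) :
    ∫⁻ g, ENNReal.ofReal (Real.exp (a * |g|)) ∂(gaussianReal 0 1)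
      ≤ ENNReal.ofReal (2 * Real.exp (a ^ 2 / 2)) := by
  have hmeas : Measurable fun g : ℝ => ENNReal.ofReal (Real.exp (a * |g|)) :=
    (Real.continuous_exp.comp (continuous_const.mul continuous_abs)).measurable.ennreal_ofReal
  rw [gaussianReal_of_var_ne_zero 0 one_ne_zero,
    lintegral_withDensity_eq_lintegral_mul _ (measurable_gaussianPDF 0 1) hmeas]
  have step : ∀ x : ℝ, (gaussianPDF 0 1 * fun g => ENNReal.ofReal (Real.exp (a * |g|))) x
      ≤ ENNReal.ofReal (Real.exp (a ^ 2 / 2)) * (gaussianPDF a 1 x + gaussianPDF (-a) 1 x) := by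
    intro x
    simp only [Pi.mul_apply, gaussianPDF]
    rw [← ENNReal.ofReal_mul (gaussianPDFReal_nonneg 0 1 x),
      ← ENNReal.ofReal_add (gaussianPDFReal_nonneg a 1 x) (gaussianPDFReal_nonneg (-a) 1 x),
      ← ENNReal.ofReal_mul (Real.exp_pos _).le]
    exact ENNReal.ofReal_le_ofReal (gauss_pdf_ptwise a x)
  calc ∫⁻ x, (gaussianPDF 0 1 * fun g => ENNReal.ofReal (Real.exp (a * |g|))) x
      ≤ ∫⁻ x, ENNReal.ofReal (Real.exp (a ^ 2 / 2)) * (gaussianPDF a 1 x + gaussianPDF (-a) 1 x) :=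
        lintegral_mono step
    _ = ENNReal.ofReal (Real.exp (a ^ 2 / 2)) * (∫⁻ x, (gaussianPDF a 1 x + gaussianPDF (-a) 1 x)) := by
        rw [lintegral_const_mul' _ _ ENNReal.ofReal_ne_top]
    _ = ENNReal.ofReal (Real.exp (a ^ 2 / 2)) * 2 := by
        rw [lintegral_add_left (measurable_gaussianPDF a 1), lintegral_gaussianPDF_eq_one a one_ne_zero,
          lintegral_gaussianPDF_eq_one (-a) one_ne_zero]; norm_num
    _ = ENNReal.ofReal (2 * Real.exp (a ^ 2 / 2)) := by
        rw [mul_comm (2:ℝ), ENNReal.ofReal_mul (Real.exp_pos _).le]; norm_num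

lemma gauss_exp_integrable (a : ℝ) :
    Integrable (fun g => Real.exp (a * |g|)) (gaussianReal 0 1) := by
  constructor
  · exact (Real.continuous_exp.comp (continuous_const.mul continuous_abs)).aestronglyMeasurable
  · rw [hasFiniteIntegral_iff_ofReal (ae_of_all _ fun x => (Real.exp_pos _).le)]
    exact lt_of_le_of_lt (gauss_lint a) ENNReal.ofReal_lt_top

lemma gauss_exp_integral_le (a : ℝ) :
    ∫ g, Real.exp (a * |g|) ∂(gaussianReal 0 1) ≤ 2 * Real.exp (a ^ 2 / 2) := by
  rw [integral_eq_lintegral_of_nonneg_ae (f := fun g : ℝ => Real.exp (a * |g|))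
    (ae_of_all _ fun x => (Real.exp_pos _).le)
    (Real.continuous_exp.comp (continuous_const.mul continuous_abs)).aestronglyMeasurable]
  exact ENNReal.toReal_le_of_le_ofReal (by positivity) (gauss_lint a)


lemma deriv_bound_at {c : ℝ} {f : ℝ → ℝ} {S : Finset ℝ}
    (hb : ∀ y ∉ (S : Set ℝ), |deriv f y| ≤ c * Real.exp (c * |y|)) {x : ℝ}
    (hcont : ContinuousAt (deriv f) x) : |deriv f x| ≤ c * Real.exp (c * |x|) := by
  by_cases hx : x ∈ (S : Set ℝ)
  · have hopen : ∀ᶠ y in 𝓝 x, y ∉ ((S : Set ℝ) \ {x}) := by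
      refine (((S.finite_toSet.diff).isClosed).isOpen_compl.mem_nhds ?_)
      simp
    have hev : ∀ᶠ y in 𝓝[≠] x, |deriv f y| ≤ c * Real.exp (c * |y|) := by
      filter_upwards [eventually_nhdsWithin_of_eventually_nhds hopen,
        self_mem_nhdsWithin] with y hy1 hy2
      exact hb y (fun hyS => hy1 ⟨hyS, hy2⟩)
    have t1 : Tendsto (fun y => |deriv f y|) (𝓝[≠] x) (𝓝 |deriv f x|) :=
      ((continuous_abs.continuousAt.comp hcont).tendsto).mono_left nhdsWithin_le_nhds
    have t2 : Tendsto (fun y => c * Real.exp (c * |y|)) (𝓝[≠] x) (𝓝 (c * Real.exp (c * |x|))) :=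
      ((continuous_const.mul (Real.continuous_exp.comp
        (continuous_const.mul continuous_abs))).continuousAt.tendsto).mono_left nhdsWithin_le_nhds
    exact le_of_tendsto_of_tendsto t1 t2 hev
  · exact hb x hx

lemma deriv_lip {c : ℝ} (hc : 0 < c) {f : ℝ → ℝ} {S : Finset ℝ}
    (hb2 : ∀ y ∉ (S : Set ℝ), |deriv (deriv f) y| ≤ c * Real.exp (c * |y|))
    {x δ : ℝ} (hδ : 0 < δ)
    (hx : ∀ y ∈ Set.Ioo (x - δ) (x + δ), DifferentiableAt ℝ (deriv f) y)
    {t : ℝ} (ht : |t| ≤ δ / 2) :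
    |deriv f (x + t) - deriv f x| ≤ (c * Real.exp (c * (|x| + δ))) * |t| := by
  set M := c * Real.exp (c * (|x| + δ)) with hM
  have ht' := abs_le.mp ht
  have hxx := abs_le.mp (le_refl |x|)
  have hsub : Set.uIcc x (x + t) ⊆ Set.Ioo (x - δ) (x + δ) := by
    intro y hy
    rcases Set.mem_uIcc.mp hy with ⟨h1, h2⟩ | ⟨h1, h2⟩ <;>
      exact ⟨by linarith, by linarith⟩
  have hMbound : ∀ y ∈ Set.Ioo (x - δ) (x + δ), y ∉ (S : Set ℝ) →
      |deriv (deriv f) y| ≤ M := by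
    intro y hy hyS
    refine (hb2 y hyS).trans ?_
    have : |y| ≤ |x| + δ := abs_le.mpr ⟨by linarith [hy.1], by linarith [hy.2]⟩
    exact mul_le_mul_of_nonneg_left (Real.exp_le_exp.mpr
      (mul_le_mul_of_nonneg_left this hc.le)) hc.le
  have hae : ∀ᵐ y, y ∈ Set.uIoc x (x + t) → ‖deriv (deriv f) y‖ ≤ M := by
    filter_upwards [measure_eq_zero_iff_ae_notMem.mp (S.finite_toSet.measure_zero volume)]
      with y hyS hy
    exact (Real.norm_eq_abs _) ▸ hMbound y (hsub (Set.uIoc_subset_uIcc hy)) hyS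
  have hint : IntervalIntegrable (deriv (deriv f)) volume x (x + t) := by
    rw [intervalIntegrable_iff]
    refine Integrable.mono' (integrableOn_const (C := M) measure_Ioc_lt_top.ne)
      ((measurable_deriv (deriv f)).aestronglyMeasurable.restrict) ?_
    rw [ae_restrict_iff' measurableSet_uIoc]
    exact hae
  have hFTC : ∫ y in x..(x + t), deriv (deriv f) y = deriv f (x + t) - deriv f x :=
    intervalIntegral.integral_eq_sub_of_hasDerivAt
      (fun y hy => (hx y (hsub hy)).hasDerivAt) hint
  calc |deriv f (x + t) - deriv f x| = ‖∫ y in x..(x + t), deriv (deriv f) y‖ := by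
        rw [hFTC, Real.norm_eq_abs]
    _ ≤ M * |x + t - x| := intervalIntegral.norm_integral_le_of_norm_le_const_ae hae
    _ = M * |t| := by ring_nf

set_option maxHeartbeats 1000000 in
/-- Gaussian smoothing approximation: there are constants `C, C'` depending
only on `c` such that for every continuous `f` that is twice differentiable
outside a finite set `S` with `|f|, |f'|, |f''| ≤ c e^{c|·|}` wherever defined,
every `η ∈ (0,1)`, and every `x, δ` with `f` twice differentiable on
`(x−δ, x+δ)`, one has
`|f'(x) − T_η[f'](x)| ≤ C(δ e^{C|x|} + e^{C|x|} e^{−C'(δ/η)²})`, where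
`T_η[g](x) = E[g(x + ηG)]` with `G` standard Gaussian. -/
theorem gaussian_smoothing_derivative_bound (c : ℝ) (hc : 0 < c) :
    ∃ C C' : ℝ, 0 < C ∧ 0 < C' ∧
      ∀ (f : ℝ → ℝ) (S : Finset ℝ),
        Continuous f →
        (∀ y ∉ (S : Set ℝ), DifferentiableAt ℝ f y) →
        (∀ y ∉ (S : Set ℝ), DifferentiableAt ℝ (deriv f) y) →
        (∀ y, |f y| ≤ c * Real.exp (c * |y|)) →
        (∀ y ∉ (S : Set ℝ), |deriv f y| ≤ c * Real.exp (c * |y|)) →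
        (∀ y ∉ (S : Set ℝ), |deriv (deriv f) y| ≤ c * Real.exp (c * |y|)) →
        ∀ η ∈ Set.Ioo (0 : ℝ) 1, ∀ x δ : ℝ, 0 < δ →
        (∀ y ∈ Set.Ioo (x - δ) (x + δ),
          DifferentiableAt ℝ f y ∧ DifferentiableAt ℝ (deriv f) y) →
        |deriv f x - ∫ g, deriv f (x + η * g) ∂(gaussianReal 0 1)|
          ≤ C * (δ * Real.exp (C * |x|) +
              Real.exp (C * |x|) * Real.exp (-(C' * (δ / η) ^ 2))) := by
  set C : ℝ := (5 * c + 5) * Real.exp (2 * c ^ 2 + c) with hCdef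
  have hC0 : 0 < C := by positivity
  have hcC : c ≤ C := by
    have h1 : (1:ℝ) ≤ Real.exp (2 * c ^ 2 + c) := Real.one_le_exp (by positivity)
    nlinarith
  refine ⟨C, 1/16, hC0, by norm_num, ?_⟩
  intro f S hfc hd1 hd2 hf0 hf1 hf2 η hη x δ hδ hIoo
  obtain ⟨hη0, hη1⟩ := hη
  set γ := gaussianReal 0 1 with hγ
  set h : ℝ → ℝ := fun g => deriv f (x + η * g) with hh
  -- x is in the interval
  have hxmem : x ∈ Set.Ioo (x - δ) (x + δ) := ⟨by linarith, by linarith⟩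
  have hdx : |deriv f x| ≤ c * Real.exp (c * |x|) :=
    deriv_bound_at hf1 (hIoo x hxmem).2.continuousAt
  have hexpx : Real.exp (c * |x|) ≤ Real.exp (C * |x|) :=
    Real.exp_le_exp.mpr (mul_le_mul_of_nonneg_right hcC (abs_nonneg x))
  -- a.e. the point x + η g avoids S
  have hae_notS : ∀ᵐ g ∂γ, x + η * g ∉ (S : Set ℝ) := by
    have hfin : {g : ℝ | x + η * g ∈ (S : Set ℝ)}.Finite := by
      refine Set.Finite.subset ((S.finite_toSet).image (fun s => (s - x) / η)) ?_
      intro g hg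
      exact ⟨x + η * g, hg, by field_simp; ring⟩
    have h0 : γ {g : ℝ | x + η * g ∈ (S : Set ℝ)} = 0 :=
      gaussianReal_absolutelyContinuous 0 one_ne_zero (hfin.measure_zero volume)
    exact measure_eq_zero_iff_ae_notMem.mp h0
  -- measurability and integrability of h
  have hmeas : AEStronglyMeasurable h γ :=
    ((measurable_deriv f).comp (measurable_const.add (measurable_id.const_mul η))).aestronglyMeasurable
  have hbound_h : ∀ᵐ g ∂γ, |h g| ≤ c * Real.exp (c * |x|) * Real.exp (c * |g|) := by
    filter_upwards [hae_notS] with g hg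
    have h1 : |h g| ≤ c * Real.exp (c * |x + η * g|) := hf1 _ hg
    have h2 : |x + η * g| ≤ |x| + |g| := by
      calc |x + η * g| ≤ |x| + |η * g| := abs_add_le _ _
        _ ≤ |x| + |g| := by
            rw [abs_mul, abs_of_pos hη0]
            nlinarith [abs_nonneg g]
    calc |h g| ≤ c * Real.exp (c * (|x| + |g|)) := by
          refine h1.trans (mul_le_mul_of_nonneg_left (Real.exp_le_exp.mpr ?_) hc.le)
          exact mul_le_mul_of_nonneg_left h2 hc.le
      _ = c * Real.exp (c * |x|) * Real.exp (c * |g|) := by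
          rw [mul_add, Real.exp_add]; ring
  have h_int : Integrable h γ := by
    refine Integrable.mono' ((gauss_exp_integrable c).const_mul (c * Real.exp (c * |x|)))
      hmeas ?_
    filter_upwards [hbound_h] with g hg
    simpa [Real.norm_eq_abs] using hg
  have habs_int : Integrable (fun g => |deriv f x - h g|) γ :=
    ((integrable_const (deriv f x)).sub h_int).abs
  -- rewrite as integral of difference
  have hrew : deriv f x - ∫ g, h g ∂γ = ∫ g, (deriv f x - h g) ∂γ := by
    rw [integral_sub (integrable_const _) h_int, integral_const]
    simp [measure_univ]
  have habs : |deriv f x - ∫ g, h g ∂γ| ≤ ∫ g, |deriv f x - h g| ∂γ := by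
    rw [hrew]
    simpa [Real.norm_eq_abs] using
      norm_integral_le_integral_norm (μ := γ) (f := fun g => deriv f x - h g)
  by_cases hδ1 : δ ≤ 1
  · -- main case
    obtain ⟨R, hRdef⟩ : ∃ R : ℝ, R = δ / (2 * η) := ⟨_, rfl⟩
    have hR0 : 0 < R := by rw [hRdef]; positivity
    have hηR : η * R = δ / 2 := by rw [hRdef]; field_simp
    have hδη : δ / η = 2 * R := by rw [hRdef]; field_simp
    obtain ⟨M, hMdef⟩ : ∃ M : ℝ, M = c * Real.exp (c * (|x| + δ)) := ⟨_, rfl⟩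
    have hM0 : 0 < M := by rw [hMdef]; positivity
    obtain ⟨K, hKdef⟩ : ∃ K : ℝ, K = 2 * c * Real.exp (c * |x|) * Real.exp (-R ^ 2) := ⟨_, rfl⟩
    have hK0 : 0 < K := by rw [hKdef]; positivity
    -- pointwise a.e. bound
    have hpt : ∀ᵐ g ∂γ, |deriv f x - h g| ≤ M * (δ / 2) + K * Real.exp ((c + R) * |g|) := by
      filter_upwards [hae_notS] with g hg
      by_cases hgR : |g| ≤ R
      · have ht : |η * g| ≤ δ / 2 := by
          rw [abs_mul, abs_of_pos hη0, ← hηR]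
          exact mul_le_mul_of_nonneg_left hgR hη0.le
        have hlip : |deriv f (x + η * g) - deriv f x|
            ≤ (c * Real.exp (c * (|x| + δ))) * |η * g| :=
          deriv_lip hc hf2 hδ (fun y hy => (hIoo y hy).2) ht
        rw [← hMdef] at hlip
        have : |deriv f x - h g| ≤ M * (δ / 2) := by
          rw [abs_sub_comm]
          exact hlip.trans (mul_le_mul_of_nonneg_left ht hM0.le)
        nlinarith [Real.exp_pos ((c + R) * |g|)]
      · push_neg at hgR
        have h1 : |deriv f x - h g| ≤ |deriv f x| + |h g| := abs_sub _ _
        have h2 : |h g| ≤ c * Real.exp (c * |x|) * Real.exp (c * |g|) := by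
          have h1' : |h g| ≤ c * Real.exp (c * |x + η * g|) := hf1 _ hg
          have h2' : |x + η * g| ≤ |x| + |g| := by
            calc |x + η * g| ≤ |x| + |η * g| := abs_add_le _ _
              _ ≤ |x| + |g| := by
                  rw [abs_mul, abs_of_pos hη0]; nlinarith [abs_nonneg g]
          calc |h g| ≤ c * Real.exp (c * (|x| + |g|)) := by
                refine h1'.trans (mul_le_mul_of_nonneg_left (Real.exp_le_exp.mpr ?_) hc.le)
                exact mul_le_mul_of_nonneg_left h2' hc.le
            _ = c * Real.exp (c * |x|) * Real.exp (c * |g|) := by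
                rw [mul_add, Real.exp_add]; ring
        have h3 : c * Real.exp (c * |x|) ≤ c * Real.exp (c * |x|) * Real.exp (c * |g|) := by
          nlinarith [mul_le_mul_of_nonneg_left (Real.one_le_exp (mul_nonneg hc.le (abs_nonneg g)))
            (mul_nonneg hc.le (Real.exp_pos (c * |x|)).le)]
        have h4 : Real.exp (c * |g|) ≤ Real.exp (-R ^ 2) * Real.exp ((c + R) * |g|) := by
          rw [← Real.exp_add]
          refine Real.exp_le_exp.mpr ?_
          nlinarith
        have h5 : |deriv f x - h g| ≤ 2 * (c * Real.exp (c * |x|)) * Real.exp (c * |g|) := by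
          calc |deriv f x - h g| ≤ |deriv f x| + |h g| := h1
            _ ≤ c * Real.exp (c * |x|) * Real.exp (c * |g|)
                + c * Real.exp (c * |x|) * Real.exp (c * |g|) := add_le_add (hdx.trans h3) h2
            _ = 2 * (c * Real.exp (c * |x|)) * Real.exp (c * |g|) := by ring
        have h6 : 2 * (c * Real.exp (c * |x|)) * Real.exp (c * |g|)
            ≤ K * Real.exp ((c + R) * |g|) := by
          rw [hKdef]
          nlinarith [Real.exp_pos (c * |x|), Real.exp_pos (-R^2), Real.exp_pos ((c+R)*|g|)]
        nlinarith [mul_pos hM0 (by linarith : (0:ℝ) < δ / 2)]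
    -- integrate the bound
    have hrhs_int : Integrable (fun g => M * (δ / 2) + K * Real.exp ((c + R) * |g|)) γ :=
      (integrable_const _).add ((gauss_exp_integrable (c + R)).const_mul K)
    have hint_le : ∫ g, |deriv f x - h g| ∂γ
        ≤ M * (δ / 2) + K * (2 * Real.exp ((c + R) ^ 2 / 2)) := by
      calc ∫ g, |deriv f x - h g| ∂γ
          ≤ ∫ g, (M * (δ / 2) + K * Real.exp ((c + R) * |g|)) ∂γ :=
            integral_mono_ae habs_int hrhs_int hpt
        _ = M * (δ / 2) + K * ∫ g, Real.exp ((c + R) * |g|) ∂γ := by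
            rw [integral_add (integrable_const _) ((gauss_exp_integrable (c + R)).const_mul K),
              integral_const, integral_const_mul]
            simp [measure_univ, hγ]
        _ ≤ M * (δ / 2) + K * (2 * Real.exp ((c + R) ^ 2 / 2)) := by
            refine add_le_add le_rfl (mul_le_mul_of_nonneg_left ?_ hK0.le)
            exact gauss_exp_integral_le (c + R)
    -- final arithmetic
    have hterm1 : M * (δ / 2) ≤ C * (δ * Real.exp (C * |x|)) := by
      have hMle : M ≤ c * Real.exp c * Real.exp (c * |x|) := by
        rw [hMdef, mul_add, Real.exp_add]
        have hde : Real.exp (c * δ) ≤ Real.exp c := Real.exp_le_exp.mpr (by nlinarith)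
        nlinarith [mul_le_mul_of_nonneg_left hde (mul_nonneg hc.le (Real.exp_pos (c * |x|)).le)]
      have hcoef : c * Real.exp c / 2 ≤ C := by
        rw [hCdef]
        nlinarith [Real.exp_le_exp.mpr (by nlinarith : c ≤ 2 * c ^ 2 + c), Real.exp_pos c,
          Real.exp_pos (2 * c ^ 2 + c)]
      calc M * (δ / 2) ≤ (c * Real.exp c * Real.exp (c * |x|)) * (δ / 2) := by
            exact mul_le_mul_of_nonneg_right hMle (by linarith)
        _ = (c * Real.exp c / 2) * (δ * Real.exp (c * |x|)) := by ring
        _ ≤ C * (δ * Real.exp (C * |x|)) := by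
            refine mul_le_mul hcoef (mul_le_mul_of_nonneg_left hexpx hδ.le) (by positivity) hC0.le
    have hterm2 : K * (2 * Real.exp ((c + R) ^ 2 / 2))
        ≤ C * (Real.exp (C * |x|) * Real.exp (-(1/16 * (δ / η) ^ 2))) := by
      have he : Real.exp (-R ^ 2) * Real.exp ((c + R) ^ 2 / 2)
          ≤ Real.exp (3 * c ^ 2 / 2) * Real.exp (-(1/16 * (δ / η) ^ 2)) := by
        rw [← Real.exp_add, ← Real.exp_add, hδη]
        refine Real.exp_le_exp.mpr ?_
        nlinarith [sq_nonneg (R - 2 * c), sq_nonneg R]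
      have hcoef : 4 * c * Real.exp (3 * c ^ 2 / 2) ≤ C := by
        rw [hCdef]
        nlinarith [Real.exp_le_exp.mpr (by nlinarith : 3 * c ^ 2 / 2 ≤ 2 * c ^ 2 + c),
          Real.exp_pos (3 * c ^ 2 / 2), Real.exp_pos (2 * c ^ 2 + c)]
      calc K * (2 * Real.exp ((c + R) ^ 2 / 2))
          = (4 * c) * Real.exp (c * |x|) * (Real.exp (-R ^ 2) * Real.exp ((c + R) ^ 2 / 2)) := by
            rw [hKdef]; ring
        _ ≤ (4 * c) * Real.exp (c * |x|) *
            (Real.exp (3 * c ^ 2 / 2) * Real.exp (-(1/16 * (δ / η) ^ 2))) := by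
            refine mul_le_mul_of_nonneg_left he (by positivity)
        _ = (4 * c * Real.exp (3 * c ^ 2 / 2)) *
            (Real.exp (c * |x|) * Real.exp (-(1/16 * (δ / η) ^ 2))) := by ring
        _ ≤ C * (Real.exp (C * |x|) * Real.exp (-(1/16 * (δ / η) ^ 2))) := by
            refine mul_le_mul hcoef (mul_le_mul_of_nonneg_right hexpx (Real.exp_pos _).le)
              (by positivity) hC0.le
    calc |deriv f x - ∫ g, h g ∂γ| ≤ ∫ g, |deriv f x - h g| ∂γ := habs
      _ ≤ M * (δ / 2) + K * (2 * Real.exp ((c + R) ^ 2 / 2)) := hint_le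
      _ ≤ C * (δ * Real.exp (C * |x|)) + C * (Real.exp (C * |x|) * Real.exp (-(1/16 * (δ / η) ^ 2))) :=
          add_le_add hterm1 hterm2
      _ = C * (δ * Real.exp (C * |x|) + Real.exp (C * |x|) * Real.exp (-(1/16 * (δ / η) ^ 2))) := by
          ring
  · -- crude case δ > 1
    push_neg at hδ1
    have hint_le : ∫ g, |deriv f x - h g| ∂γ
        ≤ c * Real.exp (c * |x|) + c * Real.exp (c * |x|) * (2 * Real.exp (c ^ 2 / 2)) := by
      have hpt : ∀ᵐ g ∂γ, |deriv f x - h g|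
          ≤ c * Real.exp (c * |x|) + c * Real.exp (c * |x|) * Real.exp (c * |g|) := by
        filter_upwards [hbound_h] with g hg
        calc |deriv f x - h g| ≤ |deriv f x| + |h g| := abs_sub _ _
          _ ≤ c * Real.exp (c * |x|) + c * Real.exp (c * |x|) * Real.exp (c * |g|) :=
              add_le_add hdx hg
      calc ∫ g, |deriv f x - h g| ∂γ
          ≤ ∫ g, (c * Real.exp (c * |x|) + c * Real.exp (c * |x|) * Real.exp (c * |g|)) ∂γ :=
            integral_mono_ae habs_int
              ((integrable_const _).add ((gauss_exp_integrable c).const_mul _)) hpt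
        _ = c * Real.exp (c * |x|) + c * Real.exp (c * |x|) * ∫ g, Real.exp (c * |g|) ∂γ := by
            rw [integral_add (integrable_const _) ((gauss_exp_integrable c).const_mul _),
              integral_const, integral_const_mul]
            simp [measure_univ, hγ]
        _ ≤ c * Real.exp (c * |x|) + c * Real.exp (c * |x|) * (2 * Real.exp (c ^ 2 / 2)) := by
            refine add_le_add le_rfl (mul_le_mul_of_nonneg_left (gauss_exp_integral_le c)
              (by positivity))
    have hfinal : c * Real.exp (c * |x|) + c * Real.exp (c * |x|) * (2 * Real.exp (c ^ 2 / 2))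
        ≤ C * (δ * Real.exp (C * |x|)) := by
      have h1 : c * Real.exp (c * |x|) * (1 + 2 * Real.exp (c ^ 2 / 2))
          ≤ C * Real.exp (C * |x|) := by
        have hcoef : c * (1 + 2 * Real.exp (c ^ 2 / 2)) ≤ C := by
          rw [hCdef]
          nlinarith [Real.exp_le_exp.mpr (by nlinarith : c ^ 2 / 2 ≤ 2 * c ^ 2 + c),
            Real.one_le_exp (by positivity : (0:ℝ) ≤ 2 * c ^ 2 + c),
            Real.exp_pos (c ^ 2 / 2), Real.exp_pos (2 * c ^ 2 + c)]
        calc c * Real.exp (c * |x|) * (1 + 2 * Real.exp (c ^ 2 / 2))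
            = (c * (1 + 2 * Real.exp (c ^ 2 / 2))) * Real.exp (c * |x|) := by ring
          _ ≤ C * Real.exp (C * |x|) := mul_le_mul hcoef hexpx (Real.exp_pos _).le hC0.le
      have h2 : C * Real.exp (C * |x|) ≤ C * (δ * Real.exp (C * |x|)) := by
        nlinarith [mul_le_mul_of_nonneg_left hδ1.le
          (mul_nonneg hC0.le (Real.exp_pos (C * |x|)).le)]
      nlinarith [Real.exp_pos (c * |x|), Real.exp_pos (c ^ 2 / 2)]
    calc |deriv f x - ∫ g, h g ∂γ| ≤ ∫ g, |deriv f x - h g| ∂γ := habs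
      _ ≤ c * Real.exp (c * |x|) + c * Real.exp (c * |x|) * (2 * Real.exp (c ^ 2 / 2)) := hint_le
      _ ≤ C * (δ * Real.exp (C * |x|)) := hfinal
      _ ≤ C * (δ * Real.exp (C * |x|) + Real.exp (C * |x|) * Real.exp (-(1/16 * (δ / η) ^ 2))) := by
          nlinarith [mul_nonneg hC0.le (mul_nonneg (Real.exp_pos (C * |x|)).le
            (Real.exp_pos (-(1/16 * (δ / η) ^ 2))).le)]
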